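/- Let η ∈ ℕ^N, 1 ≤ i ≤ N−1 with η_i < η_{i+1}, and let I be maximal with respect to η with i, i+1 ∈ I. Then I \ {i} is maximal with respect to s_iη and c_{I\{i\}}(s_iη) = c_I(η). -/
import Mathlib


/-- The composition `c_I(η)`. -/
def cI {N : ℕ} (η : Fin N → ℕ) (I : Finset (Fin N)) : Fin N → ℕ := fun i =>
  if hi : i ∈ I then
    if h : (I.filter fun j => i < j).Nonempty
    then η ((I.filter fun j => i < j).min' h)
    else η (I.min' ⟨i, hi⟩) + 1
  else η i

/-- `I = {t_1 < … < t_s}` is maximal with respect to `η`: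
`η_j ≠ η_{t_u}` for `t_{u-1} < j < t_u` and `η_j ≠ η_{t_1} + 1` for `j > t_s`. -/
def MaximalWrt {N : ℕ} (η : Fin N → ℕ) (I : Finset (Fin N)) : Prop :=
  I.Nonempty ∧ ∀ j : Fin N, j ∉ I →
    if h : (I.filter fun t => j < t).Nonempty
    then η j ≠ η ((I.filter fun t => j < t).min' h)
    else ∀ hI : I.Nonempty, η j ≠ η (I.min' hI) + 1


section helpers
variable {N : ℕ}

lemma swap_apply_other (η : Fin N → ℕ) {i i1 m : Fin N} (h1 : m ≠ i) (h2 : m ≠ i1) :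
    (η ∘ Equiv.swap i i1) m = η m := by
  simp [Equiv.swap_apply_of_ne_of_ne h1 h2]

lemma key_min {i : Fin N} {h : (i:ℕ)+1 < N} (η : Fin N → ℕ) (T : Finset (Fin N))
    (hmem : (⟨(i:ℕ)+1, h⟩ : Fin N) ∈ T)
    (hne : T.min' ⟨_, hmem⟩ ≠ ⟨(i:ℕ)+1, h⟩)
    (hmem' : (⟨(i:ℕ)+1, h⟩ : Fin N) ∈ T.erase i) :
    (η ∘ Equiv.swap i ⟨(i:ℕ)+1, h⟩) ((T.erase i).min' ⟨_, hmem'⟩) = η (T.min' ⟨_, hmem⟩) := by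
  set i1 : Fin N := ⟨(i:ℕ)+1, h⟩ with hi1
  by_cases hmi : T.min' ⟨_, hmem⟩ = i
  · have hE : (T.erase i).min' ⟨_, hmem'⟩ = i1 := by
      refine le_antisymm (Finset.min'_le _ _ hmem') (Finset.le_min' _ _ _ ?_)
      intro y hy
      rcases Finset.mem_erase.1 hy with ⟨hy1, hy2⟩
      have h1 : i ≤ y := hmi ▸ Finset.min'_le _ _ hy2
      have h2 : (i:ℕ) ≠ (y:ℕ) := fun hc => hy1 (Fin.ext hc.symm)
      rw [Fin.le_def] at h1 ⊢
      simp only [hi1]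
      omega
    rw [hE, hmi]
    simp [hi1]
  · have hmE : T.min' ⟨_, hmem⟩ ∈ T.erase i := Finset.mem_erase.2 ⟨hmi, Finset.min'_mem _ _⟩
    have hE : (T.erase i).min' ⟨_, hmem'⟩ = T.min' ⟨_, hmem⟩ := by
      refine le_antisymm (Finset.min'_le _ _ hmE) (Finset.le_min' _ _ _ ?_)
      exact fun y hy => Finset.min'_le _ _ (Finset.mem_erase.1 hy).2
    rw [hE, swap_apply_other η hmi hne]

end helpers
theorem stmt_11 (N : ℕ) (η : Fin N → ℕ) (i : Fin N) (h : (i : ℕ) + 1 < N)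
    (hlt : η i < η ⟨(i : ℕ) + 1, h⟩) (I : Finset (Fin N))
    (hmax : MaximalWrt η I) (hi : i ∈ I) (hi1 : (⟨(i : ℕ) + 1, h⟩ : Fin N) ∈ I) :
    MaximalWrt (η ∘ Equiv.swap i ⟨(i : ℕ) + 1, h⟩) (I.erase i) ∧
    cI (η ∘ Equiv.swap i ⟨(i : ℕ) + 1, h⟩) (I.erase i) = cI η I := by
  obtain ⟨hIne, hcond⟩ := hmax
  set i1 : Fin N := ⟨(i:ℕ)+1, h⟩ with hi1def
  set η' : Fin N → ℕ := η ∘ Equiv.swap i i1 with hη'def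
  have hlt' : i < i1 := by rw [Fin.lt_def]; simp [hi1def]
  have hne1 : i1 ≠ i := ne_of_gt hlt'
  have hsucc : ∀ t : Fin N, i < t → i1 ≤ t := by
    intro t ht
    rw [Fin.lt_def] at ht
    rw [Fin.le_def]
    simp only [hi1def]
    omega
  have hi1e : i1 ∈ I.erase i := Finset.mem_erase.2 ⟨hne1, hi1⟩
  have hη'i : η' i = η i1 := by simp [hη'def]
  have hη'i1 : η' i1 = η i := by simp [hη'def]
  have hη'o : ∀ m : Fin N, m ≠ i → m ≠ i1 → η' m = η m :=
    fun m h1 h2 => swap_apply_other η h1 h2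
  have hminIne : ∀ hT : I.Nonempty, I.min' hT ≠ i1 := by
    intro hT hc
    have := Finset.min'_le I i hi
    rw [hc] at this
    exact absurd (lt_of_lt_of_le hlt' this) (lt_irrefl i)
  have hkeyI : η' ((I.erase i).min' ⟨i1, hi1e⟩) = η (I.min' ⟨i1, hi1⟩) :=
    key_min η I hi1 (hminIne _) hi1e
  constructor
  · refine ⟨⟨i1, hi1e⟩, ?_⟩
    intro j hj
    by_cases hji : j = i
    · subst hji
      have hmemf : i1 ∈ (I.erase j).filter (fun t => j < t) :=
        Finset.mem_filter.2 ⟨hi1e, hlt'⟩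
      have hfne : ((I.erase j).filter fun t => j < t).Nonempty := ⟨i1, hmemf⟩
      rw [dif_pos hfne]
      have hminf : ((I.erase j).filter fun t => j < t).min' hfne = i1 := by
        refine le_antisymm (Finset.min'_le _ _ hmemf) (Finset.le_min' _ _ _ ?_)
        exact fun y hy => hsucc y (Finset.mem_filter.1 hy).2
      rw [hminf, hη'i, hη'i1]
      exact hlt.ne'
    · have hjI : j ∉ I := fun hc => hj (Finset.mem_erase.2 ⟨hji, hc⟩)
      have hji1 : j ≠ i1 := fun hc => hjI (hc ▸ hi1)
      have H := hcond j hjI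
      have hηj : η' j = η j := hη'o j hji hji1
      have hker : ((I.erase i).filter fun t => j < t) = (I.filter fun t => j < t).erase i :=
        Finset.filter_erase _ _ _
      by_cases hjlti : j < i
      · -- case A : j < i
        have hmemT : i1 ∈ I.filter fun t => j < t :=
          Finset.mem_filter.2 ⟨hi1, lt_trans hjlti hlt'⟩
        have hfI : (I.filter fun t => j < t).Nonempty := ⟨i1, hmemT⟩
        rw [dif_pos hfI] at H
        have hiT : i ∈ I.filter fun t => j < t := Finset.mem_filter.2 ⟨hi, hjlti⟩
        have hneT : (I.filter fun t => j < t).min' ⟨_, hmemT⟩ ≠ i1 := by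
          intro hc
          have := Finset.min'_le _ i hiT
          rw [hc] at this
          exact absurd (lt_of_lt_of_le hlt' this) (lt_irrefl i)
        have hmemT' : i1 ∈ (I.filter fun t => j < t).erase i :=
          Finset.mem_erase.2 ⟨hne1, hmemT⟩
        have hKey : η' (((I.filter fun t => j < t).erase i).min' ⟨i1, hmemT'⟩) =
            η ((I.filter fun t => j < t).min' ⟨i1, hmemT⟩) :=
          key_min η (I.filter fun t => j < t) hmemT hneT hmemT'
        simp only [hker]
        have hfne' : ((I.filter fun t => j < t).erase i).Nonempty := ⟨i1, hmemT'⟩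
        rw [dif_pos hfne', hηj]
        exact fun hc => H (hc.trans hKey)
      · -- case B : i1 < j
        have hi1j : i1 < j := by
          rw [Fin.lt_def]
          have h1 : ¬ ((j:ℕ) < (i:ℕ)) := by rw [← Fin.lt_def]; exact hjlti
          have h2 : (j:ℕ) ≠ (i:ℕ) := fun hc => hji (Fin.ext hc)
          have h3 : (j:ℕ) ≠ (i1:ℕ) := fun hc => hji1 (Fin.ext hc)
          simp only [hi1def] at h3 ⊢
          omega
        have hinot : i ∉ I.filter fun t => j < t := by
          intro hc
          exact absurd (lt_trans (lt_trans hlt' hi1j) (Finset.mem_filter.1 hc).2)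
            (lt_irrefl i)
        have heq : (I.filter fun t => j < t).erase i = I.filter fun t => j < t :=
          Finset.erase_eq_of_notMem hinot
        simp only [hker, heq]
        by_cases hfI : (I.filter fun t => j < t).Nonempty
        · rw [dif_pos hfI] at H ⊢
          rw [hηj]
          have hm := Finset.min'_mem _ hfI
          have hmgt : j < (I.filter fun t => j < t).min' hfI := (Finset.mem_filter.1 hm).2
          have hval : η' ((I.filter fun t => j < t).min' hfI) =
              η ((I.filter fun t => j < t).min' hfI) := by
            refine hη'o _ (fun hc => ?_) (fun hc => ?_)
            · rw [hc, Fin.lt_def] at hmgt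
              rw [Fin.lt_def] at hi1j hlt'
              omega
            · rw [hc, Fin.lt_def] at hmgt
              rw [Fin.lt_def] at hi1j
              omega
          rw [hval]
          exact H
        · rw [dif_neg hfI] at H ⊢
          intro hT
          exact fun hc => H ⟨i1, hi1⟩
            ((hηj.symm.trans hc).trans (congrArg (· + 1) hkeyI))
  · funext k
    unfold cI
    by_cases hki : k = i
    · subst hki
      have hnotin : k ∉ I.erase k := fun hc => (Finset.mem_erase.1 hc).1 rfl
      rw [dif_neg hnotin, dif_pos hi]
      have hmemf : i1 ∈ I.filter fun t => k < t := Finset.mem_filter.2 ⟨hi1, hlt'⟩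
      have hfI : (I.filter fun t => k < t).Nonempty := ⟨i1, hmemf⟩
      rw [dif_pos hfI]
      have hminf : (I.filter fun t => k < t).min' hfI = i1 := by
        refine le_antisymm (Finset.min'_le _ _ hmemf) (Finset.le_min' _ _ _ ?_)
        exact fun y hy => hsucc y (Finset.mem_filter.1 hy).2
      rw [hminf]
      exact hη'i
    · by_cases hkI : k ∈ I
      · have hke : k ∈ I.erase i := Finset.mem_erase.2 ⟨hki, hkI⟩
        rw [dif_pos hke, dif_pos hkI]
        have hker : ((I.erase i).filter fun t => k < t) = (I.filter fun t => k < t).erase i :=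
          Finset.filter_erase _ _ _
        by_cases hklti : k < i
        · have hmemT : i1 ∈ I.filter fun t => k < t :=
            Finset.mem_filter.2 ⟨hi1, lt_trans hklti hlt'⟩
          have hfI : (I.filter fun t => k < t).Nonempty := ⟨i1, hmemT⟩
          have hiT : i ∈ I.filter fun t => k < t := Finset.mem_filter.2 ⟨hi, hklti⟩
          have hneT : (I.filter fun t => k < t).min' ⟨_, hmemT⟩ ≠ i1 := by
            intro hc
            have := Finset.min'_le _ i hiT
            rw [hc] at this
            exact absurd (lt_of_lt_of_le hlt' this) (lt_irrefl i)
          have hmemT' : i1 ∈ (I.filter fun t => k < t).erase i :=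
            Finset.mem_erase.2 ⟨hne1, hmemT⟩
          have hKey : η' (((I.filter fun t => k < t).erase i).min' ⟨i1, hmemT'⟩) =
              η ((I.filter fun t => k < t).min' ⟨i1, hmemT⟩) :=
            key_min η (I.filter fun t => k < t) hmemT hneT hmemT'
          simp only [hker]
          have hfne' : ((I.filter fun t => k < t).erase i).Nonempty := ⟨i1, hmemT'⟩
          rw [dif_pos hfne', dif_pos hfI]
          exact hKey
        · have hi1k : i1 ≤ k := by
            rw [Fin.le_def]
            have h1 : ¬ ((k:ℕ) < (i:ℕ)) := by rw [← Fin.lt_def]; exact hklti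
            have h2 : (k:ℕ) ≠ (i:ℕ) := fun hc => hki (Fin.ext hc)
            simp only [hi1def]
            omega
          have hinot : i ∉ I.filter fun t => k < t := by
            intro hc
            exact absurd (lt_trans (lt_of_lt_of_le hlt' hi1k) (Finset.mem_filter.1 hc).2)
              (lt_irrefl i)
          have heq : (I.filter fun t => k < t).erase i = I.filter fun t => k < t :=
            Finset.erase_eq_of_notMem hinot
          simp only [hker, heq]
          by_cases hfI : (I.filter fun t => k < t).Nonempty
          · rw [dif_pos hfI, dif_pos hfI]
            have hm := Finset.min'_mem _ hfI
            have hmgt : k < (I.filter fun t => k < t).min' hfI := (Finset.mem_filter.1 hm).2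
            refine hη'o _ (fun hc => ?_) (fun hc => ?_)
            · rw [hc, Fin.lt_def] at hmgt
              rw [Fin.le_def] at hi1k
              rw [Fin.lt_def] at hlt'
              omega
            · rw [hc, Fin.lt_def] at hmgt
              rw [Fin.le_def] at hi1k
              omega
          · rw [dif_neg hfI, dif_neg hfI]
            exact congrArg (· + 1) hkeyI
      · have hnotin : k ∉ I.erase i := fun hc => hkI (Finset.mem_erase.1 hc).2
        rw [dif_neg hnotin, dif_neg hkI]
        exact hη'o k hki (fun hc => hkI (hc ▸ hi1))
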